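/- The map θ from the group ⟨a,b,c,d ∣ acad, ac⁻¹ad⁻¹, bcbd, bc⁻¹bd⁻¹⟩ to the group ⟨a,b,c,d ∣ acac⁻¹, adad⁻¹, bcbd, bc⁻¹bd⁻¹⟩ defined on generators by θ(a)=b, θ(b)=b⁻¹a, θ(c)=b⁻¹c, θ(d)=db is a well-defined group homomorphism. -/

import Mathlib

namespace BMGroups

/-- Generators a, b, c, d of the free group on four letters. -/
def a : FreeGroup (Fin 4) := FreeGroup.of 0
def b : FreeGroup (Fin 4) := FreeGroup.of 1
def c : FreeGroup (Fin 4) := FreeGroup.of 2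
def d : FreeGroup (Fin 4) := FreeGroup.of 3

/-- Relators of Γ₄ = ⟨a,b,c,d ∣ acac⁻¹, adad⁻¹, bcbd, bc⁻¹bd⁻¹⟩. -/
def rels4 : Set (FreeGroup (Fin 4)) :=
  {a * c * a * c⁻¹, a * d * a * d⁻¹, b * c * b * d, b * c⁻¹ * b * d⁻¹}

/-- Relators of Γ₃₀ = ⟨a,b,c,d ∣ acad, ac⁻¹ad⁻¹, bcbd, bc⁻¹bd⁻¹⟩. -/
def rels30 : Set (FreeGroup (Fin 4)) :=
  {a * c * a * d, a * c⁻¹ * a * d⁻¹, b * c * b * d, b * c⁻¹ * b * d⁻¹}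

/-- Relators of Γ₅ = ⟨a,b,c,d ∣ acac⁻¹, adad⁻¹, bcb⁻¹c, bdb⁻¹d⟩. -/
def rels5 : Set (FreeGroup (Fin 4)) :=
  {a * c * a * c⁻¹, a * d * a * d⁻¹, b * c * b⁻¹ * c, b * d * b⁻¹ * d}

/-- Relators of Γ₁₀ = ⟨a,b,c,d ∣ acac⁻¹, ada⁻¹d, bcbc⁻¹, bdb⁻¹d⁻¹⟩. -/
def rels10 : Set (FreeGroup (Fin 4)) :=
  {a * c * a * c⁻¹, a * d * a⁻¹ * d, b * c * b * c⁻¹, b * d * b⁻¹ * d⁻¹}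

/-- The group Γ₄. -/
abbrev G4 := PresentedGroup rels4
/-- The group Γ₃₀. -/
abbrev G30 := PresentedGroup rels30
/-- The group Γ₅. -/
abbrev G5 := PresentedGroup rels5
/-- The group Γ₁₀. -/
abbrev G10 := PresentedGroup rels10

/-- The images of the generators a,b,c,d in a presented group. -/
def gen {rels : Set (FreeGroup (Fin 4))} (i : Fin 4) : PresentedGroup rels :=
  PresentedGroup.of i

/-- θ : Γ₃₀ → Γ₄, a ↦ b, b ↦ b⁻¹a, c ↦ b⁻¹c, d ↦ db, is a well-defined
group homomorphism. -/
theorem theta_well_defined :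
    ∃ θ : G30 →* G4,
      θ (gen 0) = gen 1 ∧
      θ (gen 1) = (gen 1)⁻¹ * gen 0 ∧
      θ (gen 2) = (gen 1)⁻¹ * gen 2 ∧
      θ (gen 3) = gen 3 * gen 1 := by
  set A : G4 := gen 0 with hA
  set B : G4 := gen 1 with hB
  set C : G4 := gen 2 with hC
  set D : G4 := gen 3 with hD
  have mk_rel : ∀ r ∈ rels4, (QuotientGroup.mk r : G4) = 1 := fun r hr =>
    (QuotientGroup.eq_one_iff r).mpr (Subgroup.subset_normalClosure hr)
  have h1 : A * C * A * C⁻¹ = 1 := mk_rel _ (Set.mem_insert _ _)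
  have h2 : A * D * A * D⁻¹ = 1 := mk_rel _ (by right; left; rfl)
  have h3 : B * C * B * D = 1 := mk_rel _ (by right; right; left; rfl)
  have h4 : B * C⁻¹ * B * D⁻¹ = 1 := mk_rel _ (by right; right; right; rfl)
  set A : G4 := gen 0 with hA
  set B : G4 := gen 1 with hB
  set C : G4 := gen 2 with hC
  set D : G4 := gen 3 with hD
  have mk_rel : ∀ r ∈ rels4, (QuotientGroup.mk r : G4) = 1 := fun r hr =>
    (QuotientGroup.eq_one_iff r).mpr (Subgroup.subset_normalClosure hr)
  have h1 : A * C * A * C⁻¹ = 1 := mk_rel _ (Set.mem_insert _ _)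
  have h2 : A * D * A * D⁻¹ = 1 := mk_rel _ (by right; left; rfl)
  have h3 : B * C * B * D = 1 := mk_rel _ (by right; right; left; rfl)
  have h4 : B * C⁻¹ * B * D⁻¹ = 1 := mk_rel _ (by right; right; right; rfl)
  -- derived identities
  have key : B⁻¹ * C = D⁻¹ * B := by
    rw [← mul_inv_eq_one]
    have e : B⁻¹ * C * (D⁻¹ * B)⁻¹ = D⁻¹ * (B * C⁻¹ * B * D⁻¹)⁻¹ * D := by group
    rw [e, h4]; group
  have key3 : A * C⁻¹ * A = C⁻¹ := by
    have e : A * C⁻¹ * A * C = (A * C)⁻¹ * (A * C * A * C⁻¹) * (A * C) := by group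
    have e1 : A * C⁻¹ * A * C = 1 := by rw [e, h1]; group
    exact mul_eq_one_iff_eq_inv.mp e1
  -- the lifted map
  let f : Fin 4 → G4 := ![B, B⁻¹ * A, B⁻¹ * C, D * B]
  have hrels : ∀ r ∈ rels30, FreeGroup.lift f r = 1 := by
    intro r hr
    have fa : FreeGroup.lift f a = B := by simp [a, f]
    have fb : FreeGroup.lift f b = B⁻¹ * A := by simp [b, f]
    have fc : FreeGroup.lift f c = B⁻¹ * C := by simp [c, f]
    have fd : FreeGroup.lift f d = D * B := by simp [d, f]
    rcases hr with hr | hr | hr | hr <;> subst hr <;>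
        simp only [map_mul, map_inv, fa, fb, fc, fd]
    · -- B * (B⁻¹*C) * B * (D*B) = 1
      have e : B * (B⁻¹ * C) * B * (D * B) = B⁻¹ * (B * C * B * D) * B := by group
      rw [e, h3]; group
    · -- B * (B⁻¹*C)⁻¹ * B * (D*B)⁻¹ = 1
      have e : B * (B⁻¹ * C)⁻¹ * B * (D * B)⁻¹ = B * C⁻¹ * B * D⁻¹ := by group
      rw [e]; exact h4
    · -- (B⁻¹*A) * (B⁻¹*C) * (B⁻¹*A) * (D*B) = 1
      rw [key]
      have e : B⁻¹ * A * (D⁻¹ * B) * (B⁻¹ * A) * (D * B)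
          = B⁻¹ * ((A * D)⁻¹ * (A * D * A * D⁻¹) * (A * D)) * B := by group
      rw [e, h2]; group
    · -- (B⁻¹*A) * (B⁻¹*C)⁻¹ * (B⁻¹*A) * (D*B)⁻¹ = 1
      have e : B⁻¹ * A * (B⁻¹ * C)⁻¹ * (B⁻¹ * A) * (D * B)⁻¹
          = B⁻¹ * (A * C⁻¹ * A) * B⁻¹ * D⁻¹ := by group
      rw [e, key3]
      have e2 : B⁻¹ * C⁻¹ * B⁻¹ * D⁻¹ = (D * (B * C * B * D) * D⁻¹)⁻¹ := by group
      rw [e2, h3]; group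
  refine ⟨PresentedGroup.toGroup hrels, ?_, ?_, ?_, ?_⟩ <;>
    simp [gen, PresentedGroup.toGroup.of, f] <;> rfl


end BMGroups
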